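/- Let D be compact convex, f convex differentiable with curvature constant C_f, and g(x) := max_{s ∈ D} ⟨x - s, ∇f(x)⟩ the duality gap. For any x ∈ D, step-size α ∈ [0,1], and s ∈ D achieving min_{y ∈ D} ⟨y, ∇f(x)⟩, the point y := x + α(s - x) satisfies f(y) ≤ f(x) - α·g(x) + α²·C_f. -/

import Mathlib

/-- Step improvement with exact linear minimization: for convex differentiable `f`
with curvature constant `Cf` over the compact convex set `D`, duality gap
`g(x) = max_{s ∈ D} ⟨x - s, ∇f(x)⟩`, any `x ∈ D`, step size `α ∈ [0,1]`, and
`s ∈ D` minimizing the linearization `y ↦ ⟨y, ∇f(x)⟩` over `D`, the point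
`y = x + α(s - x)` satisfies `f(y) ≤ f(x) - α g(x) + α² Cf`. -/
theorem step_improvement_exact_linear_minimizer
    {X : Type*} [NormedAddCommGroup X] [InnerProductSpace ℝ X] [CompleteSpace X]
    (D : Set X) (hDcomp : IsCompact D) (hDconv : Convex ℝ D)
    (f : X → ℝ) (hdiff : Differentiable ℝ f) (hconv : ConvexOn ℝ D f)
    (Cf : ℝ)
    (hCf : Cf = sSup {r : ℝ | ∃ x ∈ D, ∃ s ∈ D, ∃ α ∈ Set.Icc (0 : ℝ) 1,
        r = (1 / α ^ 2) *
          (f (x + α • (s - x)) - f x - inner ℝ (x + α • (s - x) - x) (gradient f x))})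
    (hbdd : BddAbove {r : ℝ | ∃ x ∈ D, ∃ s ∈ D, ∃ α ∈ Set.Icc (0 : ℝ) 1,
        r = (1 / α ^ 2) *
          (f (x + α • (s - x)) - f x - inner ℝ (x + α • (s - x) - x) (gradient f x))})
    (g : X → ℝ)
    (hg : ∀ x, g x = sSup ((fun s => (inner ℝ (x - s) (gradient f x) : ℝ)) '' D))
    (x : X) (hx : x ∈ D) (α : ℝ) (hα : α ∈ Set.Icc (0 : ℝ) 1)
    (s : X) (hs : s ∈ D)
    (hmin : ∀ y ∈ D, (inner ℝ s (gradient f x) : ℝ) ≤ inner ℝ y (gradient f x)) :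
    f (x + α • (s - x)) ≤ f x - α * g x + α ^ 2 * Cf := by
  -- g x = ⟨x - s, ∇f x⟩
  have hgx : g x = (inner ℝ (x - s) (gradient f x) : ℝ) := by
    rw [hg]
    apply IsGreatest.csSup_eq
    constructor
    · exact ⟨s, hs, rfl⟩
    · rintro r ⟨y, hy, rfl⟩
      simp only [inner_sub_left]
      have := hmin y hy
      linarith
  rcases eq_or_lt_of_le hα.1 with h0 | h0
  · subst hCf
    simp [← h0]
  · -- α > 0
    have hmem : (1 / α ^ 2) *
        (f (x + α • (s - x)) - f x - inner ℝ (x + α • (s - x) - x) (gradient f x)) ∈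
        {r : ℝ | ∃ x ∈ D, ∃ s ∈ D, ∃ α ∈ Set.Icc (0 : ℝ) 1,
          r = (1 / α ^ 2) *
            (f (x + α • (s - x)) - f x - inner ℝ (x + α • (s - x) - x) (gradient f x))} :=
      ⟨x, hx, s, hs, α, hα, rfl⟩
    have hle : (1 / α ^ 2) *
        (f (x + α • (s - x)) - f x - inner ℝ (x + α • (s - x) - x) (gradient f x)) ≤ Cf := by
      rw [hCf]; exact le_csSup hbdd hmem
    have hα2 : (0:ℝ) < α ^ 2 := by positivity
    have key : f (x + α • (s - x)) - f x - inner ℝ (x + α • (s - x) - x) (gradient f x)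
        ≤ α ^ 2 * Cf := by
      rw [div_mul_eq_mul_div, one_mul, div_le_iff₀ hα2] at hle
      linarith [hle]
    have hinner : (inner ℝ (x + α • (s - x) - x) (gradient f x) : ℝ) = -(α * g x) := by
      rw [hgx]
      simp [inner_smul_left, inner_sub_left]
      ring
    rw [hinner] at key
    linarith
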